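/- arXiv:1404.0544 — 4 statements merged into one kernel-verified Lean document; each statement's English description precedes it below -/
import Mathlib

section
/- For every N ≥ 1 and every subset A ⊆ Ω_N, the weights w_N satisfy the stationary master equation of the mean-field spin-flip dynamics: Σ_{x ∈ A} w_N(A \ {x}) · Λ((|A|−1)/N) + Σ_{x ∈ Ω_N \ A} w_N(A ∪ {x}) · M((|A|+1)/N) = w_N(A) · [ |A| · M(|A|/N) + (N−|A|) · Λ(|A|/N) ]. Equivalently, since w_N(C) depends only on |C|: |A| · w_{|A|−1} · Λ((|A|−1)/N) + (N−|A|) · w_{|A|+1} · M((|A|+1)/N) = w_{|A|} · [ |A| · M(|A|/N) + (N−|A|) · Λ(|A|/N) ], where w_k = ∏_{m=0}^{k−1} f_N(m/N). -/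
/-- The stationary weights `w_N(C) = ∏_{m<|C|} f_N(m/N)`, with
`f_N(y) = Λ(y)/M(y+1/N)`, satisfy the stationary master equation of the
mean-field spin-flip dynamics, both in the set form and in the equivalent
cardinality form (since `w_N(C)` depends only on `|C|`). -/
theorem stmt_1 (Λ M : ℝ → ℝ)
    (hΛpos : ∀ y ∈ Set.Icc (0:ℝ) 1, 0 < Λ y)
    (hMpos : ∀ y ∈ Set.Icc (0:ℝ) 1, 0 < M y)
    (hΛC1 : ContDiffOn ℝ 1 Λ (Set.Icc 0 1))
    (hMC1 : ContDiffOn ℝ 1 M (Set.Icc 0 1))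
    (N : ℕ) (hN : 1 ≤ N)
    (w : Finset ℕ → ℝ)
    (hw : ∀ C : Finset ℕ,
      w C = ∏ m ∈ Finset.range C.card, Λ (m / N) / M (m / N + 1 / N))
    (A : Finset ℕ) (hA : A ⊆ Finset.range N) :
    ((∑ x ∈ A, w (A.erase x) * Λ (((A.card : ℝ) - 1) / N))
        + ∑ x ∈ Finset.range N \ A, w (insert x A) * M (((A.card : ℝ) + 1) / N)
      = w A * ((A.card : ℝ) * M (A.card / N) + ((N : ℝ) - A.card) * Λ (A.card / N)))
    ∧
    ((A.card : ℝ) * w (Finset.range (A.card - 1)) * Λ (((A.card : ℝ) - 1) / N)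
        + ((N : ℝ) - A.card) * w (Finset.range (A.card + 1)) * M (((A.card : ℝ) + 1) / N)
      = w (Finset.range A.card) *
          ((A.card : ℝ) * M (A.card / N) + ((N : ℝ) - A.card) * Λ (A.card / N))) := by
  have hAcard : A.card ≤ N := by
    simpa using Finset.card_le_card hA
  have hNpos : (0:ℝ) < N := by
    exact_mod_cast lt_of_lt_of_le one_pos (by exact_mod_cast hN)
  set F : ℕ → ℝ := fun k => ∏ m ∈ Finset.range k, Λ (m / N) / M (m / N + 1 / N) with hF
  have hstep : ∀ k : ℕ, k < N → F (k+1) * M (((k:ℝ)+1)/N) = F k * Λ ((k:ℝ)/N) := by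
    intro k hk
    have hMk : M ((k:ℝ)/N + 1/N) ≠ 0 := by
      have hmem : ((k:ℝ)/N + 1/N) ∈ Set.Icc (0:ℝ) 1 := by
        constructor
        · positivity
        · rw [← add_div, div_le_one hNpos]
          have : (k:ℝ) + 1 ≤ N := by exact_mod_cast hk
          linarith
      exact (hMpos _ hmem).ne'
    have hsucc : F (k+1) = F k * (Λ ((k:ℝ)/N) / M ((k:ℝ)/N + 1/N)) := by
      simp only [hF]
      rw [Finset.prod_range_succ]
    have he : ((k:ℝ)+1)/N = (k:ℝ)/N + 1/N := by ring
    rw [hsucc, he, mul_assoc, div_mul_cancel₀ _ hMk]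
  have hL1 : ∀ k : ℕ, k ≤ N →
      (k:ℝ) * (F (k-1) * Λ (((k:ℝ)-1)/N)) = (k:ℝ) * (F k * M ((k:ℝ)/N)) := by
    intro k hk
    cases k with
    | zero => simp
    | succ j =>
        have hj : j < N := lt_of_lt_of_le (Nat.lt_succ_self j) hk
        have hc : (((j+1:ℕ):ℝ) - 1)/N = (j:ℝ)/N := by push_cast; ring
        simp only [Nat.add_sub_cancel, hc]
        congr 1
        have := (hstep j hj).symm
        push_cast
        push_cast at this
        exact this
  have hL2 : ∀ k : ℕ, k ≤ N →
      ((N:ℝ)-k) * (F (k+1) * M (((k:ℝ)+1)/N)) = ((N:ℝ)-k) * (F k * Λ ((k:ℝ)/N)) := by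
    intro k hk
    rcases eq_or_lt_of_le hk with h | h
    · subst h; simp
    · rw [hstep k h]
  have key : ∀ k : ℕ, k ≤ N →
      (k:ℝ) * (F (k-1) * Λ (((k:ℝ)-1)/N)) + ((N:ℝ)-k) * (F (k+1) * M (((k:ℝ)+1)/N))
        = F k * ((k:ℝ) * M ((k:ℝ)/N) + ((N:ℝ)-k) * Λ ((k:ℝ)/N)) := by
    intro k hk
    rw [hL1 k hk, hL2 k hk]; ring
  have hwr : ∀ m : ℕ, w (Finset.range m) = F m := by
    intro m; rw [hw]; simp [hF]
  constructor
  · have h1 : ∑ x ∈ A, w (A.erase x) * Λ (((A.card : ℝ) - 1) / N)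
        = (A.card:ℝ) * (F (A.card - 1) * Λ (((A.card:ℝ)-1)/N)) := by
      rw [Finset.sum_congr rfl (fun x hx => by
        rw [hw, Finset.card_erase_of_mem hx])]
      rw [Finset.sum_const, nsmul_eq_mul]
    have h2 : ∑ x ∈ Finset.range N \ A, w (insert x A) * M (((A.card : ℝ) + 1) / N)
        = ((N:ℝ) - A.card) * (F (A.card + 1) * M (((A.card:ℝ)+1)/N)) := by
      rw [Finset.sum_congr rfl (fun x hx => by
        have hx' : x ∉ A := (Finset.mem_sdiff.mp hx).2
        rw [hw, Finset.card_insert_of_notMem hx'])]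
      rw [Finset.sum_const, Finset.card_sdiff_of_subset hA, Finset.card_range, nsmul_eq_mul,
        Nat.cast_sub hAcard]
    rw [h1, h2, hw A]
    exact key A.card hAcard
  · rw [hwr, hwr, hwr]
    have := key A.card hAcard
    linarith [this]
end

section
/- (Laplace's method on [0,1].) Let F : [0,1] → ℝ be continuous, attaining its maximum at a unique point p ∈ (0,1) with F(y) < F(p) for every y ≠ p, and suppose F is twice continuously differentiable in a neighborhood of p with F''(p) < 0. Let h : [0,1] → ℝ be continuous. Then √N · ∫₀¹ h(y) · exp(N·(F(y) − F(p))) dy converges to h(p) · √(2π / (−F''(p))) as N → ∞. -/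
open Filter Topology intervalIntegral MeasureTheory

/-- FTC-based two-sided second order Taylor bound. -/
lemma laplace_aux_taylor {F : ℝ → ℝ} {p r m M : ℝ} (hr : 0 < r)
    (hd : ∀ x ∈ Set.Ioo (p - r) (p + r), DifferentiableAt ℝ F x)
    (hd' : ∀ x ∈ Set.Ioo (p - r) (p + r), DifferentiableAt ℝ (deriv F) x)
    (hc'' : ContinuousOn (deriv (deriv F)) (Set.Ioo (p - r) (p + r)))
    (hG0 : deriv F p = 0)
    (hbd : ∀ u ∈ Set.Ioo (p - r) (p + r),
      m ≤ deriv (deriv F) u ∧ deriv (deriv F) u ≤ M) :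
    ∀ s : ℝ, |s| < r →
      m / 2 * s ^ 2 ≤ F (s + p) - F p ∧ F (s + p) - F p ≤ M / 2 * s ^ 2 := by
  set V := Set.Ioo (p - r) (p + r) with hV
  have hpV : p ∈ V := by constructor <;> simp [hV] <;> linarith
  have hsub : ∀ x ∈ V, Set.uIcc p x ⊆ V := fun x hx =>
    Set.ordConnected_Ioo.uIcc_subset hpV hx
  have hGcont : ContinuousOn (deriv F) V := fun x hx =>
    (hd' x hx).continuousAt.continuousWithinAt
  -- F x - F p = ∫ deriv F
  have claim2 : ∀ x ∈ V, F x - F p = ∫ t in p..x, deriv F t := by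
    intro x hx
    refine (integral_deriv_eq_sub (fun y hy => hd y (hsub x hx hy)) ?_).symm
    exact (hGcont.mono (hsub x hx)).intervalIntegrable
  -- deriv F x = ∫ deriv (deriv F)
  have claim1 : ∀ x ∈ V, deriv F x = ∫ u in p..x, deriv (deriv F) u := by
    intro x hx
    have := integral_deriv_eq_sub (f := deriv F) (a := p) (b := x)
      (fun y hy => hd' y (hsub x hx hy))
      ((hc''.mono (hsub x hx)).intervalIntegrable)
    rw [this, hG0, sub_zero]
  have hIccV : ∀ x ∈ V, p ≤ x → Set.Icc p x ⊆ V := by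
    intro x hx hpx
    have := hsub x hx
    rwa [Set.uIcc_of_le hpx] at this
  have hIccV' : ∀ x ∈ V, x ≤ p → Set.Icc x p ⊆ V := by
    intro x hx hpx
    have := hsub x hx
    rwa [Set.uIcc_of_ge hpx] at this
  -- bounds on deriv F
  have boundG₁ : ∀ t ∈ V, p ≤ t →
      m * (t - p) ≤ deriv F t ∧ deriv F t ≤ M * (t - p) := by
    intro t ht hpt
    have hint : IntervalIntegrable (deriv (deriv F)) MeasureTheory.volume p t :=
      (hc''.mono (hsub t ht)).intervalIntegrable
    have h1 : (∫ u in p..t, m) ≤ ∫ u in p..t, deriv (deriv F) u :=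
      integral_mono_on hpt intervalIntegrable_const hint
        (fun u hu => (hbd u (hIccV t ht hpt hu)).1)
    have h2 : (∫ u in p..t, deriv (deriv F) u) ≤ ∫ u in p..t, M :=
      integral_mono_on hpt hint intervalIntegrable_const
        (fun u hu => (hbd u (hIccV t ht hpt hu)).2)
    rw [intervalIntegral.integral_const, smul_eq_mul] at h1 h2
    rw [claim1 t ht]
    constructor <;> nlinarith
  have boundG₂ : ∀ t ∈ V, t ≤ p →
      M * (t - p) ≤ deriv F t ∧ deriv F t ≤ m * (t - p) := by
    intro t ht hpt
    have hint : IntervalIntegrable (deriv (deriv F)) MeasureTheory.volume t p :=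
      ((hc''.mono (hsub t ht)).intervalIntegrable).symm
    have h1 : (∫ u in t..p, m) ≤ ∫ u in t..p, deriv (deriv F) u :=
      integral_mono_on hpt intervalIntegrable_const hint
        (fun u hu => (hbd u (hIccV' t ht hpt hu)).1)
    have h2 : (∫ u in t..p, deriv (deriv F) u) ≤ ∫ u in t..p, M :=
      integral_mono_on hpt hint intervalIntegrable_const
        (fun u hu => (hbd u (hIccV' t ht hpt hu)).2)
    rw [intervalIntegral.integral_const, smul_eq_mul] at h1 h2
    have : deriv F t = -∫ u in t..p, deriv (deriv F) u := by
      rw [claim1 t ht, integral_symm]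
    rw [this]
    constructor <;> nlinarith
  intro s hs
  have hx : s + p ∈ V := by
    rw [abs_lt] at hs
    exact ⟨by linarith [hs.1], by linarith [hs.2]⟩
  have hFint : IntervalIntegrable (deriv F) MeasureTheory.volume p (s + p) :=
    (hGcont.mono (hsub _ hx)).intervalIntegrable
  have key : ∀ c : ℝ, (∫ t in p..(s + p), c * (t - p)) = c / 2 * s ^ 2 := by
    intro c
    have h1 : (∫ t in p..(s + p), (t - p)) = s ^ 2 / 2 := by
      rw [intervalIntegral.integral_comp_sub_right (fun t => t) p, integral_id]
      ring
    rw [intervalIntegral.integral_const_mul, h1]; ring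
  rcases le_or_gt p (s + p) with hps | hps
  · have hIcc := hIccV _ hx hps
    have hcont₁ : IntervalIntegrable (fun t => m * (t - p)) MeasureTheory.volume p (s + p) :=
      ((continuous_const.mul (continuous_id.sub continuous_const)).intervalIntegrable _ _)
    have hcont₂ : IntervalIntegrable (fun t => M * (t - p)) MeasureTheory.volume p (s + p) :=
      ((continuous_const.mul (continuous_id.sub continuous_const)).intervalIntegrable _ _)
    have h1 : (∫ t in p..(s + p), m * (t - p)) ≤ ∫ t in p..(s + p), deriv F t :=
      integral_mono_on hps hcont₁ hFint
        (fun t ht => (boundG₁ t (hIcc ht) ht.1).1)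
    have h2 : (∫ t in p..(s + p), deriv F t) ≤ ∫ t in p..(s + p), M * (t - p) :=
      integral_mono_on hps hFint hcont₂
        (fun t ht => (boundG₁ t (hIcc ht) ht.1).2)
    rw [key m] at h1; rw [key M] at h2
    rw [claim2 _ hx]
    exact ⟨h1, h2⟩
  · have hsp : s + p ≤ p := hps.le
    have hIcc := hIccV' _ hx hsp
    have hcont₁ : IntervalIntegrable (fun t => m * (t - p)) MeasureTheory.volume (s + p) p :=
      ((continuous_const.mul (continuous_id.sub continuous_const)).intervalIntegrable _ _)
    have hcont₂ : IntervalIntegrable (fun t => M * (t - p)) MeasureTheory.volume (s + p) p :=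
      ((continuous_const.mul (continuous_id.sub continuous_const)).intervalIntegrable _ _)
    have h1 : (∫ t in (s + p)..p, M * (t - p)) ≤ ∫ t in (s + p)..p, deriv F t :=
      integral_mono_on hsp hcont₂ hFint.symm
        (fun t ht => (boundG₂ t (hIcc ht) ht.2).1)
    have h2 : (∫ t in (s + p)..p, deriv F t) ≤ ∫ t in (s + p)..p, m * (t - p) :=
      integral_mono_on hsp hFint.symm hcont₁
        (fun t ht => (boundG₂ t (hIcc ht) ht.2).2)
    have keyM : (∫ t in (s + p)..p, M * (t - p)) = -(M / 2 * s ^ 2) := by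
      rw [integral_symm, key M]
    have keym : (∫ t in (s + p)..p, m * (t - p)) = -(m / 2 * s ^ 2) := by
      rw [integral_symm, key m]
    rw [keyM] at h1; rw [keym] at h2
    have : F (s + p) - F p = -∫ t in (s + p)..p, deriv F t := by
      rw [claim2 _ hx, integral_symm]
    rw [this]
    constructor <;> linarith

lemma laplace_aux_eps {F : ℝ → ℝ} {p : ℝ} (hC2 : ContDiffAt ℝ 2 F p)
    (hG0 : deriv F p = 0) :
    ∀ ε > 0, ∃ δ > 0, ∀ s : ℝ, |s| ≤ δ →
      (deriv (deriv F) p - ε) / 2 * s ^ 2 ≤ F (s + p) - F p ∧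
      F (s + p) - F p ≤ (deriv (deriv F) p + ε) / 2 * s ^ 2 := by
  obtain ⟨u, hu, hFu⟩ := hC2.contDiffOn le_rfl (by simp)
  obtain ⟨r₀, hr₀, hball⟩ := Metric.mem_nhds_iff.mp hu
  set V := Set.Ioo (p - r₀) (p + r₀) with hVdef
  have hVu : V ⊆ u := by rw [hVdef, ← Real.ball_eq_Ioo]; exact hball
  have hVopen : IsOpen V := isOpen_Ioo
  have hFV : ContDiffOn ℝ 2 F V := hFu.mono hVu
  have hd : ∀ x ∈ V, DifferentiableAt ℝ F x := fun x hx =>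
    ((hFV.differentiableOn (by norm_num)) x hx).differentiableAt (hVopen.mem_nhds hx)
  have hF'V : ContDiffOn ℝ 1 (deriv F) V :=
    hFV.deriv_of_isOpen hVopen (m := 1) (by norm_num)
  have hd' : ∀ x ∈ V, DifferentiableAt ℝ (deriv F) x := fun x hx =>
    ((hF'V.differentiableOn (by norm_num)) x hx).differentiableAt (hVopen.mem_nhds hx)
  have hc'' : ContinuousOn (deriv (deriv F)) V :=
    hF'V.continuousOn_deriv_of_isOpen hVopen le_rfl
  have hpV : p ∈ V := ⟨by linarith, by linarith⟩
  have hcA : ContinuousAt (deriv (deriv F)) p := hc''.continuousAt (hVopen.mem_nhds hpV)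
  intro ε hε
  obtain ⟨δ', hδ', hδprop⟩ := Metric.continuousAt_iff.mp hcA ε hε
  set r := min r₀ δ' with hrdef
  have hr : 0 < r := lt_min hr₀ hδ'
  have hrr₀ : r ≤ r₀ := min_le_left _ _
  have hrδ' : r ≤ δ' := min_le_right _ _
  have hsub2 : Set.Ioo (p - r) (p + r) ⊆ V :=
    Set.Ioo_subset_Ioo (by linarith) (by linarith)
  have hbd : ∀ x ∈ Set.Ioo (p - r) (p + r),
      deriv (deriv F) p - ε ≤ deriv (deriv F) x ∧
      deriv (deriv F) x ≤ deriv (deriv F) p + ε := by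
    intro x hx
    have hdist : dist x p < δ' := by
      rw [Real.dist_eq, abs_lt]
      obtain ⟨h1, h2⟩ := hx
      constructor <;> linarith
    have := hδprop hdist
    rw [Real.dist_eq, abs_lt] at this
    constructor <;> linarith [this.1, this.2]
  have key := laplace_aux_taylor hr (fun x hx => hd x (hsub2 hx))
    (fun x hx => hd' x (hsub2 hx)) (hc''.mono hsub2) hG0 hbd
  refine ⟨r / 2, by linarith, fun s hs => key s (by linarith [abs_nonneg s])⟩

set_option maxHeartbeats 1000000 in
/-- Laplace's method on `[0,1]`: if `F` is continuous with a unique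
strict global maximum at an interior point `p`, is `C²` near `p` with `F''(p) < 0`,
and `h` is continuous, then
`√N ∫₀¹ h(y) exp(N(F(y) − F(p))) dy → h(p)·√(2π/(−F''(p)))`. -/
theorem stmt_4 (F h : ℝ → ℝ)
    (hFc : ContinuousOn F (Set.Icc 0 1))
    (p : ℝ) (hp : p ∈ Set.Ioo (0:ℝ) 1)
    (hmax : ∀ y ∈ Set.Icc (0:ℝ) 1, y ≠ p → F y < F p)
    (hC2 : ContDiffAt ℝ 2 F p)
    (hF'' : deriv (deriv F) p < 0)
    (hh : ContinuousOn h (Set.Icc 0 1)) :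
    Tendsto
      (fun N : ℕ =>
        Real.sqrt N * ∫ y in (0:ℝ)..1, h y * Real.exp (N * (F y - F p)))
      atTop
      (𝓝 (h p * Real.sqrt (2 * Real.pi / (-deriv (deriv F) p)))) := by
  obtain ⟨hp0, hp1⟩ := hp
  set a := -deriv (deriv F) p with hadef
  have ha : 0 < a := neg_pos.mpr hF''
  have hIccN : Set.Icc (0:ℝ) 1 ∈ 𝓝 p := Icc_mem_nhds hp0 hp1
  have hG0 : deriv F p = 0 := by
    apply IsLocalMax.deriv_eq_zero
    filter_upwards [hIccN] with y hy
    rcases eq_or_ne y p with hyp | hyp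
    · simp [hyp]
    · exact (hmax y hy hyp).le
  -- Taylor bound with ε = a/2
  obtain ⟨δ₁, hδ₁, htay⟩ := laplace_aux_eps hC2 hG0 (a / 2) (by positivity)
  set δ₀ : ℝ := min δ₁ (min (p / 2) ((1 - p) / 2)) with hδ₀def
  have hδ₀pos : 0 < δ₀ := by
    apply lt_min hδ₁; apply lt_min <;> linarith
  have hδ₀δ₁ : δ₀ ≤ δ₁ := min_le_left _ _
  have hδ₀p : δ₀ ≤ p / 2 := (min_le_right _ _).trans (min_le_left _ _)
  have hδ₀p' : δ₀ ≤ (1 - p) / 2 := (min_le_right _ _).trans (min_le_right _ _)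
  -- compact set away from p
  set K : Set ℝ := Set.Icc 0 1 \ Set.Ioo (p - δ₀) (p + δ₀) with hKdef
  have hKcomp : IsCompact K := isCompact_Icc.diff isOpen_Ioo
  have h0K : (0:ℝ) ∈ K := by
    refine ⟨⟨le_rfl, zero_le_one⟩, fun hmem => ?_⟩
    have := hmem.1; linarith
  obtain ⟨y₀, hy₀K, hy₀max⟩ := hKcomp.exists_isMaxOn ⟨0, h0K⟩ (hFc.mono Set.diff_subset)
  set c : ℝ := F p - F y₀ with hcdef
  have hc : 0 < c := by
    have hy₀ne : y₀ ≠ p := by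
      intro hcontr
      exact hy₀K.2 (by rw [hcontr]; exact ⟨by linarith, by linarith⟩)
    have := hmax y₀ hy₀K.1 hy₀ne
    simp only [hcdef]; linarith
  have hKb : ∀ y ∈ K, F y ≤ F p - c := by
    intro y hy
    have := hy₀max hy
    simp only [hcdef]; simp at this ⊢; linarith
  -- bound on h
  obtain ⟨C, hC⟩ := isCompact_Icc.exists_bound_of_continuousOn hh
  have hC0 : 0 ≤ C := le_trans (norm_nonneg (h 0)) (hC 0 ⟨le_rfl, zero_le_one⟩)
  set L : ℝ := max p (1 - p) with hLdef
  have hL : 0 < L := lt_max_iff.mpr (Or.inl hp0)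
  set b : ℝ := min (a / 4) (c / L ^ 2) with hbdef
  have hb : 0 < b := lt_min (by positivity) (by positivity)
  -- the rescaled functions
  set g : ℕ → ℝ → ℝ := fun N t =>
    h ((Real.sqrt N)⁻¹ * t + p) *
      Real.exp (N * (F ((Real.sqrt N)⁻¹ * t + p) - F p)) with hgdef
  set f : ℕ → ℝ → ℝ := fun N =>
    (Set.Ioc (-(Real.sqrt N * p)) (Real.sqrt N * (1 - p))).indicator (g N) with hfdef
  -- Step A : change of variables
  have stepA : ∀ N : ℕ, 1 ≤ N →
      Real.sqrt N * ∫ y in (0:ℝ)..1, h y * Real.exp (N * (F y - F p)) =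
      ∫ t, f N t := by
    intro N hN
    have hs : 0 < Real.sqrt N := Real.sqrt_pos.mpr (by exact_mod_cast hN)
    have hinv : (Real.sqrt N)⁻¹ ≠ 0 := inv_ne_zero hs.ne'
    have hch := intervalIntegral.integral_comp_mul_add
        (a := -(Real.sqrt N * p)) (b := Real.sqrt N * (1 - p))
        (fun y => h y * Real.exp (N * (F y - F p))) hinv p
    rw [inv_inv] at hch
    have e1 : (Real.sqrt N)⁻¹ * -(Real.sqrt N * p) + p = 0 := by
      field_simp; ring
    have e2 : (Real.sqrt N)⁻¹ * (Real.sqrt N * (1 - p)) + p = 1 := by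
      field_simp; ring
    rw [e1, e2] at hch
    have hAB : -(Real.sqrt N * p) ≤ Real.sqrt N * (1 - p) := by nlinarith
    rw [hfdef]
    rw [MeasureTheory.integral_indicator measurableSet_Ioc,
      ← intervalIntegral.integral_of_le hAB]
    rw [hgdef]
    rw [hch, smul_eq_mul]
  -- sqrt facts
  have hsqt : Tendsto (fun N : ℕ => Real.sqrt N) atTop atTop := by
    apply tendsto_atTop_atTop.mpr
    intro bb
    refine ⟨⌈bb ^ 2⌉₊, fun n hn => ?_⟩
    rcases le_or_gt bb 0 with hbb | hbb
    · exact hbb.trans (Real.sqrt_nonneg _)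
    · have h1 : bb ^ 2 ≤ (n : ℝ) := le_trans (Nat.le_ceil _) (by exact_mod_cast hn)
      calc bb = Real.sqrt (bb ^ 2) := (Real.sqrt_sq hbb.le).symm
        _ ≤ Real.sqrt n := Real.sqrt_le_sqrt h1
  have hinv0 : Tendsto (fun N : ℕ => (Real.sqrt N)⁻¹) atTop (𝓝 0) :=
    hsqt.inv_tendsto_atTop
  -- Step B : pointwise limit of g
  have stepB : ∀ t : ℝ, Tendsto (fun N : ℕ => g N t) atTop
      (𝓝 (h p * Real.exp (-(a / 2) * t ^ 2))) := by
    intro t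
    have harg : Tendsto (fun N : ℕ => (Real.sqrt N)⁻¹ * t + p) atTop (𝓝 p) := by
      have := (hinv0.mul_const t).add_const p
      simpa using this
    have hhlim : Tendsto (fun N : ℕ => h ((Real.sqrt N)⁻¹ * t + p)) atTop (𝓝 (h p)) :=
      (hh.continuousAt hIccN).tendsto.comp harg
    have hexp : Tendsto (fun N : ℕ => (N : ℝ) *
        (F ((Real.sqrt N)⁻¹ * t + p) - F p)) atTop (𝓝 (-(a / 2) * t ^ 2)) := by
      rcases eq_or_ne t 0 with ht0 | ht0
      · subst ht0
        simp only [mul_zero, zero_add, sub_self, pow_two]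
        simpa using tendsto_const_nhds
      · -- quotient limit
        have hψ : Tendsto (fun s : ℝ => (F (s + p) - F p) / s ^ 2) (𝓝[≠] 0)
            (𝓝 (deriv (deriv F) p / 2)) := by
          rw [Metric.tendsto_nhdsWithin_nhds]
          intro ε hε
          obtain ⟨δ, hδ, hδp⟩ := laplace_aux_eps hC2 hG0 ε hε
          refine ⟨δ, hδ, fun {s} hs hd => ?_⟩
          have hs0 : s ≠ 0 := hs
          have hs2 : (0:ℝ) < s ^ 2 := by positivity
          rw [Real.dist_eq, sub_zero] at hd
          obtain ⟨hlo, hhi⟩ := hδp s hd.le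
          have h1 : (deriv (deriv F) p - ε) / 2 ≤ (F (s + p) - F p) / s ^ 2 :=
            (le_div_iff₀ hs2).mpr (by linarith)
          have h2 : (F (s + p) - F p) / s ^ 2 ≤ (deriv (deriv F) p + ε) / 2 :=
            (div_le_iff₀ hs2).mpr (by linarith)
          rw [Real.dist_eq]
          have : |(F (s + p) - F p) / s ^ 2 - deriv (deriv F) p / 2| ≤ ε / 2 :=
            abs_le.mpr ⟨by linarith, by linarith⟩
          linarith [half_lt_self hε]
        have hsN : Tendsto (fun N : ℕ => (Real.sqrt N)⁻¹ * t) atTop (𝓝[≠] 0) := by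
          rw [tendsto_nhdsWithin_iff]
          constructor
          · simpa using hinv0.mul_const t
          · filter_upwards [eventually_ge_atTop 1] with N hN
            have hs : 0 < Real.sqrt N := Real.sqrt_pos.mpr (by exact_mod_cast hN)
            exact mul_ne_zero (inv_ne_zero hs.ne') ht0
        have hcomp := (hψ.comp hsN).const_mul (t ^ 2)
        have heq : ∀ᶠ N : ℕ in atTop,
            t ^ 2 * ((F ((Real.sqrt N)⁻¹ * t + p) - F p) / ((Real.sqrt N)⁻¹ * t) ^ 2) =
            (N : ℝ) * (F ((Real.sqrt N)⁻¹ * t + p) - F p) := by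
          filter_upwards [eventually_ge_atTop 1] with N hN
          have hNpos : (0:ℝ) < N := by exact_mod_cast hN
          have h1 : ((Real.sqrt N)⁻¹ * t) ^ 2 = t ^ 2 / N := by
            rw [mul_pow, inv_pow, Real.sq_sqrt hNpos.le]
            ring
          rw [h1]
          field_simp
        have hval : t ^ 2 * (deriv (deriv F) p / 2) = -(a / 2) * t ^ 2 := by
          rw [hadef]; ring
        rw [hval] at hcomp
        exact Tendsto.congr' heq hcomp
    exact hhlim.mul ((Real.continuous_exp.tendsto _).comp hexp)
  -- membership helper
  have hmem : ∀ N : ℕ, 1 ≤ N →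
      ∀ t ∈ Set.Ioc (-(Real.sqrt N * p)) (Real.sqrt N * (1 - p)),
      (Real.sqrt N)⁻¹ * t + p ∈ Set.Icc (0:ℝ) 1 := by
    intro N hN t ht
    have hs : 0 < Real.sqrt N := Real.sqrt_pos.mpr (by exact_mod_cast hN)
    obtain ⟨h1, h2⟩ := ht
    have e1 : (Real.sqrt N)⁻¹ * -(Real.sqrt N * p) = -p := by field_simp
    have e2 : (Real.sqrt N)⁻¹ * (Real.sqrt N * (1 - p)) = 1 - p := by field_simp
    have hmono1 : (Real.sqrt N)⁻¹ * -(Real.sqrt N * p) ≤ (Real.sqrt N)⁻¹ * t :=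
      mul_le_mul_of_nonneg_left h1.le (inv_nonneg.mpr hs.le)
    have hmono2 : (Real.sqrt N)⁻¹ * t ≤ (Real.sqrt N)⁻¹ * (Real.sqrt N * (1 - p)) :=
      mul_le_mul_of_nonneg_left h2 (inv_nonneg.mpr hs.le)
    rw [e1] at hmono1; rw [e2] at hmono2
    constructor <;> linarith
  -- Step C : pointwise limit of f
  have stepC : ∀ t : ℝ, Tendsto (fun N : ℕ => f N t) atTop
      (𝓝 (h p * Real.exp (-(a / 2) * t ^ 2))) := by
    intro t
    apply Tendsto.congr' _ (stepB t)
    have h1 : Tendsto (fun N : ℕ => Real.sqrt N * p) atTop atTop :=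
      hsqt.atTop_mul_const hp0
    have h2 : Tendsto (fun N : ℕ => Real.sqrt N * (1 - p)) atTop atTop :=
      hsqt.atTop_mul_const (by linarith)
    filter_upwards [h1.eventually_gt_atTop |t|, h2.eventually_ge_atTop |t|]
      with N hN1 hN2
    have htmem : t ∈ Set.Ioc (-(Real.sqrt N * p)) (Real.sqrt N * (1 - p)) :=
      ⟨by have := neg_abs_le t; linarith, le_trans (le_abs_self t) hN2⟩
    exact (Set.indicator_of_mem htmem (g N)).symm
  -- Step E : measurability
  have stepE : ∀ᶠ N : ℕ in atTop, AEStronglyMeasurable (f N) volume := by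
    filter_upwards [eventually_ge_atTop 1] with N hN
    have hgIcc : ContinuousOn (fun y => h y * Real.exp ((N:ℝ) * (F y - F p)))
        (Set.Icc 0 1) :=
      hh.mul (Real.continuous_exp.comp_continuousOn
        (continuousOn_const.mul (hFc.sub continuousOn_const)))
    have haff : Continuous (fun t : ℝ => (Real.sqrt N)⁻¹ * t + p) :=
      (continuous_const.mul continuous_id).add continuous_const
    have hgN : ContinuousOn (g N)
        (Set.Ioc (-(Real.sqrt N * p)) (Real.sqrt N * (1 - p))) :=
      hgIcc.comp haff.continuousOn (fun t ht => hmem N hN t ht)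
    exact (aestronglyMeasurable_indicator_iff measurableSet_Ioc).mpr
      (hgN.aestronglyMeasurable measurableSet_Ioc)
  -- Step D : domination
  have stepD : ∀ᶠ N : ℕ in atTop,
      ∀ᵐ t : ℝ, ‖f N t‖ ≤ C * Real.exp (-b * t ^ 2) := by
    filter_upwards [eventually_ge_atTop 1] with N hN
    refine Filter.Eventually.of_forall fun t => ?_
    have hs : 0 < Real.sqrt N := Real.sqrt_pos.mpr (by exact_mod_cast hN)
    have hNpos : (0:ℝ) < N := by exact_mod_cast hN
    by_cases ht : t ∈ Set.Ioc (-(Real.sqrt N * p)) (Real.sqrt N * (1 - p))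
    · have hyIcc := hmem N hN t ht
      rw [hfdef]
      simp only
      rw [Set.indicator_of_mem ht]
      rw [hgdef]
      simp only
      set s : ℝ := (Real.sqrt N)⁻¹ * t with hsdef
      have hs2 : s ^ 2 = t ^ 2 / N := by
        rw [hsdef, mul_pow, inv_pow, Real.sq_sqrt hNpos.le]; ring
      have hNs2 : (N:ℝ) * s ^ 2 = t ^ 2 := by rw [hs2]; field_simp
      have key : (N:ℝ) * (F (s + p) - F p) ≤ -b * t ^ 2 := by
        by_cases hsmall : |s| ≤ δ₀
        · have hub := (htay s (hsmall.trans hδ₀δ₁)).2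
          have hdd : deriv (deriv F) p = -a := by rw [hadef]; ring
          rw [hdd] at hub
          have hba : b ≤ a / 4 := min_le_left _ _
          nlinarith [sq_nonneg t, sq_nonneg s]
        · have hyK : s + p ∈ K := by
            refine ⟨?_, ?_⟩
            · have := hyIcc
              rwa [show (Real.sqrt N)⁻¹ * t + p = s + p from rfl] at this
            · intro hin
              obtain ⟨hi1, hi2⟩ := hin
              exact hsmall (abs_le.mpr ⟨by linarith, by linarith⟩)
          have hFy : F (s + p) ≤ F p - c := hKb _ hyK
          have hy1 : (0:ℝ) ≤ s + p := hyIcc.1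
          have hy2 : s + p ≤ 1 := hyIcc.2
          have hL1 : p ≤ L := by rw [hLdef]; exact le_max_left _ _
          have hL2 : 1 - p ≤ L := by rw [hLdef]; exact le_max_right _ _
          have hsL : |s| ≤ L := by
            rw [abs_le]
            exact ⟨by linarith, by linarith⟩
          have hsL2 : s ^ 2 ≤ L ^ 2 := by
            obtain ⟨hA, hB⟩ := abs_le.mp hsL
            exact sq_le_sq' hA hB
          have ht2 : t ^ 2 ≤ (N:ℝ) * L ^ 2 := by
            rw [← hNs2]
            exact mul_le_mul_of_nonneg_left hsL2 hNpos.le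
          have hbc : b ≤ c / L ^ 2 := min_le_right _ _
          have h3 : (N:ℝ) * (F (s + p) - F p) ≤ -((N:ℝ) * c) := by
            have h3' : (N:ℝ) * (F (s + p) - F p) ≤ (N:ℝ) * (-c) :=
              mul_le_mul_of_nonneg_left (by linarith) hNpos.le
            linarith [h3']
          have h4 : (c / L ^ 2) * t ^ 2 ≤ (N:ℝ) * c := by
            have h4' : (c / L ^ 2) * t ^ 2 ≤ (c / L ^ 2) * ((N:ℝ) * L ^ 2) :=
              mul_le_mul_of_nonneg_left ht2 (by positivity)
            have h4'' : (c / L ^ 2) * ((N:ℝ) * L ^ 2) = (N:ℝ) * c := by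
              field_simp
            linarith
          have h5 : b * t ^ 2 ≤ (c / L ^ 2) * t ^ 2 :=
            mul_le_mul_of_nonneg_right hbc (sq_nonneg t)
          calc (N:ℝ) * (F (s + p) - F p) ≤ -((N:ℝ) * c) := h3
            _ ≤ -((c / L ^ 2) * t ^ 2) := by linarith
            _ ≤ -(b * t ^ 2) := by linarith
            _ = -b * t ^ 2 := by ring
      rw [Real.norm_eq_abs, abs_mul, abs_of_pos (Real.exp_pos _)]
      have hhy : |h (s + p)| ≤ C := by
        have := hC _ hyIcc
        rwa [Real.norm_eq_abs] at this
      exact mul_le_mul hhy (Real.exp_le_exp.mpr key) (Real.exp_pos _).le hC0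
    · rw [hfdef]
      simp only
      rw [Set.indicator_of_notMem ht]
      simp only [norm_zero]
      positivity
  -- dominated convergence
  have hbi : Integrable (fun t : ℝ => C * Real.exp (-b * t ^ 2)) :=
    (integrable_exp_neg_mul_sq hb).const_mul C
  have hdom := MeasureTheory.tendsto_integral_filter_of_dominated_convergence
    (μ := volume) (bound := fun t : ℝ => C * Real.exp (-b * t ^ 2)) stepE stepD hbi
    (Filter.Eventually.of_forall stepC)
  have hval : (∫ t : ℝ, h p * Real.exp (-(a / 2) * t ^ 2)) =
      h p * Real.sqrt (2 * Real.pi / a) := by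
    rw [MeasureTheory.integral_const_mul, integral_gaussian]
    congr 2
    field_simp
  rw [hval] at hdom
  refine Tendsto.congr' ?_ hdom
  filter_upwards [eventually_ge_atTop 1] with N hN
  exact (stepA N hN).symm
end

section
/- Let x ∈ (0,1) and suppose both F''(x) = 0 (i.e., 2a₀βθσ²/(1−θx)³ = 1/(x(1−x))) and F'''(x) = 0. Then the fourth derivative satisfies F''''(x) = −2·(1 − θ + θx) / ( (1−θx)·x²·(1−x)² ), and in particular F''''(x) < 0. -/
lemma auxD (c d e : ℝ) (n : ℕ) {y : ℝ} (h : d - e*y ≠ 0) :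
    HasDerivAt (fun z => c/(d - e*z)^(n+1)) (c*(n+1)*e/(d - e*y)^(n+2)) y := by
  have h1 : HasDerivAt (fun z : ℝ => d - e*z) (-e) y := by
    simpa using ((hasDerivAt_id y).const_mul e).const_sub d
  have h2 := h1.pow (n+1)
  have h3 := (hasDerivAt_const y c).div h2 (pow_ne_zero _ h)
  refine h3.congr_deriv (Eq.symm ?_)
  simp only [Pi.pow_apply, Nat.add_sub_cancel, Nat.cast_add, Nat.cast_one]
  field_simp
  ring

lemma auxE (c : ℝ) (n : ℕ) {y : ℝ} (h : y ≠ 0) :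
    HasDerivAt (fun z : ℝ => c/z^(n+1)) (-(c*(n+1))/y^(n+2)) y := by
  have h2 : HasDerivAt (fun z : ℝ => z^(n+1)) ((n+1)*y^n) y := by
    simpa using hasDerivAt_pow (n+1) y
  have h3 := (hasDerivAt_const y c).div h2 (pow_ne_zero _ h)
  refine h3.congr_deriv (Eq.symm ?_)
  field_simp
  ring

set_option maxHeartbeats 1000000 in
/-- If `x ∈ (0,1)` and both `F''(x) = 0` and `F'''(x) = 0`, then
`F''''(x) = −2(1−θ+θx)/((1−θx)x²(1−x)²)`, which is in particular negative. -/
theorem stmt_12 (θ a₀ c₀ c₁ H U β σ : ℝ)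
    (hθ : θ ∈ Set.Ioo (0:ℝ) 1) (ha₀ : 0 < a₀) (hc₀ : 0 < c₀) (hc₁ : 0 < c₁)
    (hβ : 0 < β) (hσ : 0 ≤ σ)
    (F : ℝ → ℝ)
    (hF : ∀ x ∈ Set.Ioo (0:ℝ) 1,
      F x = x * Real.log (c₁ / c₀) + x * β * (U - H)
        + a₀ * β * σ ^ 2 * x / (1 - θ * x)
        - x * Real.log x - (1 - x) * Real.log (1 - x))
    (x : ℝ) (hx : x ∈ Set.Ioo (0:ℝ) 1)
    (h2 : deriv (deriv F) x = 0)
    (h3 : deriv (deriv (deriv F)) x = 0) :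
    deriv (deriv (deriv (deriv F))) x
      = -2 * (1 - θ + θ * x) / ((1 - θ * x) * x ^ 2 * (1 - x) ^ 2)
    ∧ deriv (deriv (deriv (deriv F))) x < 0 := by
  obtain ⟨hθ0, hθ1⟩ := hθ
  obtain ⟨hx0, hx1⟩ := hx
  set A : ℝ := a₀ * β * σ ^ 2 with hAdef
  set G1 : ℝ → ℝ := fun z =>
    Real.log (c₁ / c₀) + β * (U - H) + A/(1 - θ*z)^(1+1) - Real.log z
      + Real.log (1 - z) with hG1def
  set G2 : ℝ → ℝ := fun z =>
    2*A*θ/(1 - θ*z)^(2+1) - 1/z^(0+1) - 1/(1 - 1*z)^(0+1) with hG2def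
  set G3 : ℝ → ℝ := fun z =>
    6*A*θ^2/(1 - θ*z)^(3+1) + 1/z^(1+1) - 1/(1 - 1*z)^(1+1) with hG3def
  -- basic facts for y ∈ Ioo 0 1
  have hufact : ∀ y ∈ Set.Ioo (0:ℝ) 1, 0 < 1 - θ*y := by
    intro y hy; nlinarith [hy.1, hy.2]
  -- deriv F = G1 on Ioo
  have hd1 : ∀ y ∈ Set.Ioo (0:ℝ) 1, deriv F y = G1 y := by
    intro y hy
    obtain ⟨hy0, hy1⟩ := hy
    have hq : (0:ℝ) < 1 - y := by linarith
    have hu : (0:ℝ) < 1 - θ*y := hufact y ⟨hy0, hy1⟩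
    have hFe : F =ᶠ[nhds y] (fun z => z * Real.log (c₁ / c₀) + z * β * (U - H)
        + A * z / (1 - θ * z) - z * Real.log z - (1 - z) * Real.log (1 - z)) := by
      filter_upwards [Ioo_mem_nhds hy0 hy1] with z hz
      exact hF z hz
    rw [hFe.deriv_eq]
    have t1 := (hasDerivAt_id y).mul_const (Real.log (c₁ / c₀))
    have t2 := ((hasDerivAt_id y).mul_const β).mul_const (U - H)
    have hlin : HasDerivAt (fun z : ℝ => 1 - θ*z) (-θ) y := by
      simpa using ((hasDerivAt_id y).const_mul θ).const_sub 1
    have t3 := ((hasDerivAt_id y).const_mul A).div hlin hu.ne'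
    have t4 := (hasDerivAt_id y).mul (Real.hasDerivAt_log hy0.ne')
    have h1z : HasDerivAt (fun z : ℝ => 1 - z) (-1) y := by
      simpa using (hasDerivAt_id y).const_sub 1
    have t5 := h1z.mul (h1z.log hq.ne')
    have tot := (((t1.add t2).add t3).sub t4).sub t5
    have : HasDerivAt (fun z => z * Real.log (c₁ / c₀) + z * β * (U - H)
        + A * z / (1 - θ * z) - z * Real.log z - (1 - z) * Real.log (1 - z)) (G1 y) y := by
      refine tot.congr_deriv (Eq.symm ?_)
      rw [hG1def]
      simp only [id]
      field_simp
      ring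
    exact this.deriv
  -- deriv (deriv F) = G2 on Ioo
  have hd2 : ∀ y ∈ Set.Ioo (0:ℝ) 1, deriv (deriv F) y = G2 y := by
    intro y hy
    obtain ⟨hy0, hy1⟩ := hy
    have hq : (0:ℝ) < 1 - y := by linarith
    have hu : (0:ℝ) < 1 - θ*y := hufact y ⟨hy0, hy1⟩
    have hFe : deriv F =ᶠ[nhds y] G1 := by
      filter_upwards [Ioo_mem_nhds hy0 hy1] with z hz
      exact hd1 z hz
    rw [hFe.deriv_eq]
    have hlog1 : HasDerivAt (fun z : ℝ => Real.log (1 - z)) ((0-1)/(1-y)) y := by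
      exact ((hasDerivAt_const y 1).sub (hasDerivAt_id y)).log hq.ne'
    have tot := ((((hasDerivAt_const y (Real.log (c₁ / c₀) + β * (U - H))).add
        (auxD A 1 θ 1 hu.ne')).sub (Real.hasDerivAt_log hy0.ne')).add hlog1)
    have : HasDerivAt G1 (G2 y) y := by
      refine tot.congr_deriv (Eq.symm ?_)
      rw [hG2def]
      field_simp
      ring
    exact this.deriv
  -- deriv^3 F = G3 on Ioo
  have hd3 : ∀ y ∈ Set.Ioo (0:ℝ) 1, deriv (deriv (deriv F)) y = G3 y := by
    intro y hy
    obtain ⟨hy0, hy1⟩ := hy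
    have hq : (0:ℝ) < 1 - y := by linarith
    have hq' : (1:ℝ) - 1*y ≠ 0 := by simpa using hq.ne'
    have hu : (0:ℝ) < 1 - θ*y := hufact y ⟨hy0, hy1⟩
    have hFe : deriv (deriv F) =ᶠ[nhds y] G2 := by
      filter_upwards [Ioo_mem_nhds hy0 hy1] with z hz
      exact hd2 z hz
    rw [hFe.deriv_eq]
    have tot := ((auxD (2*A*θ) 1 θ 2 hu.ne').sub (auxE 1 0 hy0.ne')).sub
      (auxD 1 1 1 0 hq')
    have : HasDerivAt G2 (G3 y) y := by
      refine tot.congr_deriv (Eq.symm ?_)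
      rw [hG3def]
      simp only [one_mul]
      field_simp
      ring
    exact this.deriv
  -- deriv^4 F at x
  have hq : (0:ℝ) < 1 - x := by linarith
  have hq' : (1:ℝ) - 1*x ≠ 0 := by simpa using hq.ne'
  have hu : (0:ℝ) < 1 - θ*x := hufact x ⟨hx0, hx1⟩
  have hd4 : deriv (deriv (deriv (deriv F))) x
      = 24*A*θ^3/(1-θ*x)^5 - 2/x^3 - 2/(1-x)^3 := by
    have hFe : deriv (deriv (deriv F)) =ᶠ[nhds x] G3 := by
      filter_upwards [Ioo_mem_nhds hx0 hx1] with z hz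
      exact hd3 z hz
    rw [hFe.deriv_eq]
    have tot := ((auxD (6*A*θ^2) 1 θ 3 hu.ne').add (auxE 1 1 hx0.ne')).sub
      (auxD 1 1 1 1 hq')
    have : HasDerivAt G3 (24*A*θ^3/(1-θ*x)^5 - 2/x^3 - 2/(1-x)^3) x := by
      refine tot.congr_deriv (Eq.symm ?_)
      simp only [one_mul]
      field_simp
      ring
    exact this.deriv
  -- extract the algebraic equations
  have e2 : 2*A*θ/(1-θ*x)^3 - 1/x - 1/(1-x) = 0 := by
    have := hd2 x ⟨hx0, hx1⟩
    rw [h2] at this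
    rw [hG2def] at this
    simp only [one_mul] at this
    norm_num at this ⊢
    linarith [this]
  have e3 : 6*A*θ^2/(1-θ*x)^4 + 1/x^2 - 1/(1-x)^2 = 0 := by
    have := hd3 x ⟨hx0, hx1⟩
    rw [h3] at this
    rw [hG3def] at this
    simp only [one_mul] at this
    norm_num at this ⊢
    linarith [this]
  have e1' : 2*A*θ*(x*(1-x)) = (1-θ*x)^3 := by
    field_simp at e2
    linarith [e2]
  have e2' : 3*θ*(x*(1-x)) = (1-θ*x)*(2*x-1) := by
    field_simp at e3
    have h6 : (3*θ*(x*(1-x))) * (1-θ*x)^3 = ((1-θ*x)*(2*x-1)) * (1-θ*x)^3 := by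
      linear_combination (-(3*θ*(x*(1-x))))*e1' + e3
    exact mul_right_cancel₀ (pow_ne_zero 3 hu.ne') h6
  have key : 24*A*θ^3/(1-θ*x)^5 - 2/x^3 - 2/(1-x)^3
      = -2 * (1 - θ + θ * x) / ((1 - θ * x) * x ^ 2 * (1 - x) ^ 2) := by
    field_simp
    linear_combination (12*θ^2*x^2*(1-x)^2) * e1'
      + (4*θ*x*(1-x)*(1-θ*x)^3 + 2*(1-θ*x)^4*(2*x-1)) * e2'
  constructor
  · rw [hd4, key]
  · rw [hd4, key]
    have hnum : 0 < 1 - θ + θ*x := by nlinarith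
    have hden : 0 < (1 - θ * x) * x ^ 2 * (1 - x) ^ 2 := by positivity
    have : -2 * (1 - θ + θ * x) < 0 := by nlinarith
    exact div_neg_of_neg_of_pos this hden
end

section
/- Let Λ and M be strictly positive continuously differentiable functions on [0,1], f = Λ/M, and f_N(y) = Λ(y)/M(y+1/N). Let (k_N) be a sequence of integers with 0 ≤ k_N ≤ N and k_N/N → y for some y ∈ (0,1). Then the stationary weight satisfies the asymptotics [ ∏_{m=0}^{k_N−1} f_N(m/N) ] · exp( −N·∫₀^{k_N/N} ln f(z) dz ) → √( Λ(0)·M(0) / (Λ(y)·M(y)) ) as N → ∞. -/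
open Filter Topology Set MeasureTheory

private lemma my_ftc (g φ : ℝ → ℝ)
    (hg : ContinuousOn g (Icc 0 1))
    (hφ : ContinuousOn φ (Icc 0 1))
    (hd : ∀ x ∈ Ioo (0:ℝ) 1, HasDerivAt g (φ x) x)
    {a b : ℝ} (ha : 0 ≤ a) (hab : a ≤ b) (hb : b ≤ 1) :
    ∫ t in a..b, φ t = g b - g a := by
  have hsub : Icc a b ⊆ Icc (0:ℝ) 1 := Icc_subset_Icc ha hb
  refine intervalIntegral.integral_eq_sub_of_hasDeriv_right_of_le hab (hg.mono hsub) (fun x hx => ?_) ?_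
  · exact (hd x ⟨lt_of_le_of_lt ha hx.1, lt_of_lt_of_le hx.2 hb⟩).hasDerivWithinAt
  · exact ContinuousOn.intervalIntegrable (by rw [uIcc_of_le hab]; exact hφ.mono hsub)

private lemma my_part (g φ : ℝ → ℝ)
    (hg : ContinuousOn g (Icc 0 1))
    (hφ : ContinuousOn φ (Icc 0 1))
    (hd : ∀ x ∈ Ioo (0:ℝ) 1, HasDerivAt g (φ x) x)
    {a b : ℝ} (ha : 0 ≤ a) (hab : a ≤ b) (hb : b ≤ 1) :
    (∫ t in a..b, (g t - g a)) = ∫ t in a..b, (b - t) * φ t := by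
  have hsub : Icc a b ⊆ Icc (0:ℝ) 1 := Icc_subset_Icc ha hb
  have hgc : ContinuousOn g (Icc a b) := hg.mono hsub
  have hφc : ContinuousOn φ (Icc a b) := hφ.mono hsub
  have hii : ∀ u : ℝ → ℝ, ContinuousOn u (Icc a b) → IntervalIntegrable u volume a b :=
    fun u hu => ContinuousOn.intervalIntegrable (by rwa [uIcc_of_le hab])
  have h1 : IntervalIntegrable (fun t => g t - g a) volume a b :=
    hii _ (hgc.sub continuousOn_const)
  have h2 : IntervalIntegrable (fun t => (t - b) * φ t) volume a b :=
    hii _ ((continuousOn_id.sub continuousOn_const).mul hφc)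
  have key : ∫ t in a..b, ((g t - g a) + (t - b) * φ t) =
      (fun t => (t - b) * (g t - g a)) b - (fun t => (t - b) * (g t - g a)) a := by
    apply intervalIntegral.integral_eq_sub_of_hasDeriv_right_of_le
      (f := fun t => (t - b) * (g t - g a))
      (f' := fun t => (g t - g a) + (t - b) * φ t) hab
    · exact (continuousOn_id.sub continuousOn_const).mul (hgc.sub continuousOn_const)
    · intro x hx
      have hx' : x ∈ Ioo (0:ℝ) 1 := ⟨lt_of_le_of_lt ha hx.1, lt_of_lt_of_le hx.2 hb⟩
      have hder : HasDerivAt (fun t => (t - b) * (g t - g a))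
          (1 * (g x - g a) + (x - b) * φ x) x :=
        ((hasDerivAt_id x).sub_const b).mul ((hd x hx').sub_const (g a))
      simpa using hder.hasDerivWithinAt
    · exact h1.add h2
  rw [intervalIntegral.integral_add h1 h2] at key
  simp only [sub_self, zero_mul, mul_zero, sub_zero, zero_sub] at key
  have hneg : ∫ t in a..b, (b - t) * φ t = - ∫ t in a..b, (t - b) * φ t := by
    rw [← intervalIntegral.integral_neg]
    apply intervalIntegral.integral_congr
    intro t _
    ring
  rw [hneg]
  linarith [key]

private lemma my_est (g φ : ℝ → ℝ)
    (hg : ContinuousOn g (Icc 0 1))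
    (hφ : ContinuousOn φ (Icc 0 1))
    (hd : ∀ x ∈ Ioo (0:ℝ) 1, HasDerivAt g (φ x) x)
    {a b ε : ℝ} (ha : 0 ≤ a) (hab : a ≤ b) (hb : b ≤ 1) (hε : 0 ≤ ε)
    (hω : ∀ t ∈ Icc a b, |φ t - φ a| ≤ ε) :
    |(∫ t in a..b, g t) - (b - a) * g a - (b - a) / 2 * (g b - g a)| ≤ ε * (b - a)^2 / 2 := by
  have hsub : Icc a b ⊆ Icc (0:ℝ) 1 := Icc_subset_Icc ha hb
  have hgc : ContinuousOn g (Icc a b) := hg.mono hsub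
  have hφc : ContinuousOn φ (Icc a b) := hφ.mono hsub
  have hii : ∀ u : ℝ → ℝ, ContinuousOn u (Icc a b) → IntervalIntegrable u volume a b :=
    fun u hu => ContinuousOn.intervalIntegrable (by rwa [uIcc_of_le hab])
  have i_g : IntervalIntegrable g volume a b := hii _ hgc
  have cw : ContinuousOn (fun t : ℝ => (b - t) - (b - a) / 2) (Icc a b) :=
    (continuousOn_const.sub continuousOn_id).sub continuousOn_const
  have i_w : IntervalIntegrable (fun t => ((b - t) - (b - a) / 2) * φ t) volume a b :=
    hii _ (cw.mul hφc)
  have i_wc : IntervalIntegrable (fun t => ((b - t) - (b - a) / 2) * φ a) volume a b :=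
    hii _ (cw.mul continuousOn_const)
  have i_btφ : IntervalIntegrable (fun t => (b - t) * φ t) volume a b :=
    hii _ ((continuousOn_const.sub continuousOn_id).mul hφc)
  have i_cφ : IntervalIntegrable (fun t => (b - a) / 2 * φ t) volume a b :=
    hii _ (continuousOn_const.mul hφc)
  -- ∫ ((b - t) - (b-a)/2) dt = 0
  have e0 : (∫ t in a..b, ((b - t) - (b - a) / 2)) = 0 := by
    have hbt : IntervalIntegrable (fun t : ℝ => b - t) volume a b :=
      (continuous_const.sub continuous_id).intervalIntegrable a b
    rw [intervalIntegral.integral_sub hbt intervalIntegrable_const, intervalIntegral.integral_const]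
    have h2 : (∫ t in a..b, (b - t)) = (b - a) * b - (b ^ 2 - a ^ 2) / 2 := by
      rw [intervalIntegral.integral_sub intervalIntegrable_const intervalIntegral.intervalIntegrable_id,
        intervalIntegral.integral_const, integral_id, smul_eq_mul]
    rw [h2, smul_eq_mul]
    ring
  -- expansion of the key integral
  have eC : (∫ t in a..b, ((b - t) - (b - a) / 2) * (φ t - φ a)) =
      (∫ t in a..b, (b - t) * φ t) - (b - a) / 2 * (g b - g a) := by
    have hsplit : (fun t => ((b - t) - (b - a) / 2) * (φ t - φ a)) =
        fun t => ((b - t) - (b - a) / 2) * φ t - ((b - t) - (b - a) / 2) * φ a := by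
      funext t; ring
    rw [hsplit, intervalIntegral.integral_sub i_w i_wc, intervalIntegral.integral_mul_const, e0, zero_mul, sub_zero]
    have hsplit2 : (fun t => ((b - t) - (b - a) / 2) * φ t) =
        fun t => (b - t) * φ t - (b - a) / 2 * φ t := by
      funext t; ring
    rw [hsplit2, intervalIntegral.integral_sub i_btφ i_cφ, intervalIntegral.integral_const_mul,
      my_ftc g φ hg hφ hd ha hab hb]
  have e1 : (∫ t in a..b, (g t - g a)) = (∫ t in a..b, g t) - (b - a) * g a := by
    rw [intervalIntegral.integral_sub i_g intervalIntegrable_const, intervalIntegral.integral_const, smul_eq_mul]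
  have etarget : (∫ t in a..b, g t) - (b - a) * g a - (b - a) / 2 * (g b - g a)
      = ∫ t in a..b, ((b - t) - (b - a) / 2) * (φ t - φ a) := by
    rw [eC, ← my_part g φ hg hφ hd ha hab hb, e1]
  rw [etarget]
  have hbnd : ∀ t ∈ Set.uIoc a b, ‖((b - t) - (b - a) / 2) * (φ t - φ a)‖ ≤ (b - a) / 2 * ε := by
    intro t ht
    rw [uIoc_of_le hab] at ht
    have ht' : t ∈ Icc a b := ⟨ht.1.le, ht.2⟩
    have h1 : |(b - t) - (b - a) / 2| ≤ (b - a) / 2 := by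
      rw [abs_le]
      constructor <;> [linarith [ht.2]; linarith [ht.1.le]]
    rw [Real.norm_eq_abs, abs_mul]
    exact mul_le_mul h1 (hω t ht') (abs_nonneg _) (by linarith)
  have := intervalIntegral.norm_integral_le_of_norm_le_const hbnd
  rw [Real.norm_eq_abs] at this
  calc |∫ t in a..b, ((b - t) - (b - a) / 2) * (φ t - φ a)|
      ≤ (b - a) / 2 * ε * |b - a| := this
    _ = ε * (b - a) ^ 2 / 2 := by
        rw [abs_of_nonneg (by linarith : (0:ℝ) ≤ b - a)]; ring

private lemma my_key (g φ : ℝ → ℝ)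
    (hg : ContinuousOn g (Icc 0 1))
    (hφ : ContinuousOn φ (Icc 0 1))
    (hd : ∀ x ∈ Ioo (0:ℝ) 1, HasDerivAt g (φ x) x)
    (y : ℝ) (hy : y ∈ Ioo (0:ℝ) 1)
    (k : ℕ → ℕ) (hk : ∀ N, k N ≤ N)
    (hklim : Tendsto (fun N : ℕ => (k N : ℝ) / N) atTop (𝓝 y)) :
    Tendsto (fun N : ℕ => (∑ m ∈ Finset.range (k N), g ((m : ℝ) / (N : ℝ)))
      - N * ∫ z in (0:ℝ)..((k N : ℝ) / N), g z) atTop (𝓝 ((g 0 - g y) / 2)) := by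
  have hE : Tendsto (fun N : ℕ => (N : ℝ) * (∫ z in (0:ℝ)..((k N : ℝ) / N), g z)
      - (∑ m ∈ Finset.range (k N), g ((m : ℝ) / (N : ℝ)))
      - (g ((k N : ℝ) / N) - g 0) / 2) atTop (𝓝 0) := by
    rw [Metric.tendsto_atTop]
    intro ε hε
    have hUC := isCompact_Icc.uniformContinuousOn_of_continuous hφ
    rw [Metric.uniformContinuousOn_iff] at hUC
    obtain ⟨δ, hδ, H⟩ := hUC (ε / 2) (by linarith)
    obtain ⟨n₀, hn₀⟩ := exists_nat_gt (1 / δ)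
    refine ⟨n₀ + 1, fun N hN => ?_⟩
    have hN1 : 1 ≤ N := le_trans (Nat.le_add_left 1 n₀) hN
    have hNpos : (0:ℝ) < N := by exact_mod_cast hN1
    have hNn : (1 : ℝ) / δ < N := lt_of_lt_of_le hn₀ (by exact_mod_cast le_trans (Nat.le_succ n₀) hN)
    have hδN : 1 / (N : ℝ) < δ := by
      rw [div_lt_iff₀ hNpos]
      rw [div_lt_iff₀ hδ] at hNn
      linarith
    set n := k N with hn
    have hnN : n ≤ N := hk N
    have hmem : ∀ m : ℕ, m ≤ N → ((m : ℝ) / N) ∈ Icc (0:ℝ) 1 := fun m hm =>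
      ⟨div_nonneg (Nat.cast_nonneg m) hNpos.le,
        (div_le_one hNpos).mpr (by exact_mod_cast hm)⟩
    have hadj : ∀ m : ℕ, ((m : ℝ) / N) ≤ (((m + 1 : ℕ) : ℝ) / N) := fun m => by
      rw [div_le_div_iff₀ hNpos hNpos]
      push_cast
      nlinarith
    have hgap : ∀ m : ℕ, (((m + 1 : ℕ) : ℝ) / N) - ((m : ℝ) / N) = 1 / N := fun m => by
      push_cast
      field_simp
      ring
    have hint : ∀ i < n, IntervalIntegrable g volume
        ((fun m : ℕ => (m : ℝ) / N) i) ((fun m : ℕ => (m : ℝ) / N) (i + 1)) := by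
      intro i hi
      apply ContinuousOn.intervalIntegrable
      apply hg.mono
      rw [uIcc_of_le (hadj i)]
      exact Icc_subset_Icc (hmem i (le_of_lt (lt_of_lt_of_le hi hnN))).1
        (hmem (i + 1) (by omega)).2
    have hsplit := intervalIntegral.sum_integral_adjacent_intervals (f := g) (μ := volume) hint
    simp only [Nat.cast_zero, zero_div] at hsplit
    -- hsplit : ∑ m ∈ range n, ∫ ... = ∫ 0 .. n/N
    have htel := Finset.sum_range_sub (f := fun m : ℕ => g ((m : ℝ) / N)) n
    simp only [Nat.cast_zero, zero_div] at htel
    have hEeq : (N : ℝ) * (∫ z in (0:ℝ)..((n : ℝ) / N), g z)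
        - (∑ m ∈ Finset.range n, g ((m : ℝ) / (N : ℝ))) - (g ((n : ℝ) / N) - g 0) / 2
        = ∑ m ∈ Finset.range n, ((N : ℝ) * (∫ z in ((m : ℝ) / N)..((((m + 1 : ℕ)) : ℝ) / N), g z)
            - g ((m : ℝ) / N) - (g ((((m + 1 : ℕ)) : ℝ) / N) - g ((m : ℝ) / N)) / 2) := by
      rw [← hsplit, ← htel, Finset.mul_sum, Finset.sum_div, ← Finset.sum_sub_distrib,
        ← Finset.sum_sub_distrib]
    have hterm : ∀ m ∈ Finset.range n,
        |(N : ℝ) * (∫ z in ((m : ℝ) / N)..((((m + 1 : ℕ)) : ℝ) / N), g z)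
            - g ((m : ℝ) / N) - (g ((((m + 1 : ℕ)) : ℝ) / N) - g ((m : ℝ) / N)) / 2|
          ≤ ε / (4 * N) := by
      intro m hm
      have hm' : m < n := Finset.mem_range.mp hm
      set a : ℝ := (m : ℝ) / N with ha_def
      set b : ℝ := ((m + 1 : ℕ) : ℝ) / N with hb_def
      have hmN : m ≤ N := le_trans hm'.le hnN
      have hm1N : m + 1 ≤ N := Nat.succ_le_of_lt (lt_of_lt_of_le hm' hnN)
      have ha0 : 0 ≤ a := (hmem m hmN).1
      have hab : a ≤ b := hadj m
      have hb1 : b ≤ 1 := (hmem (m + 1) hm1N).2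
      have hgapm : b - a = 1 / N := hgap m
      have hmod : ∀ t ∈ Icc a b, |φ t - φ a| ≤ ε / 2 := by
        intro t ht
        have hts : t ∈ Icc (0:ℝ) 1 := ⟨le_trans ha0 ht.1, le_trans ht.2 hb1⟩
        have has : a ∈ Icc (0:ℝ) 1 := hmem m hmN
        have hdist : dist t a < δ := by
          rw [Real.dist_eq, abs_of_nonneg (by linarith [ht.1])]
          have := ht.2
          linarith [hδN]
        have := H t hts a has hdist
        rw [Real.dist_eq] at this
        linarith
      have hest := my_est g φ hg hφ hd ha0 hab hb1 (by linarith) hmod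
      rw [hgapm] at hest
      have hTeq : (N : ℝ) * (∫ z in a..b, g z) - g a - (g b - g a) / 2
          = (N : ℝ) * ((∫ z in a..b, g z) - 1 / (N : ℝ) * g a - 1 / (N : ℝ) / 2 * (g b - g a)) := by
        field_simp
      rw [hTeq, abs_mul, abs_of_nonneg hNpos.le]
      calc (N : ℝ) * |(∫ z in a..b, g z) - 1 / (N : ℝ) * g a - 1 / (N : ℝ) / 2 * (g b - g a)|
          ≤ (N : ℝ) * (ε / 2 * (1 / (N : ℝ)) ^ 2 / 2) :=
            mul_le_mul_of_nonneg_left hest hNpos.le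
        _ = ε / (4 * N) := by field_simp; ring
    rw [Real.dist_eq, sub_zero, hEeq]
    have habs : |∑ m ∈ Finset.range n, ((N : ℝ) * (∫ z in ((m : ℝ) / N)..((((m + 1 : ℕ)) : ℝ) / N), g z)
            - g ((m : ℝ) / N) - (g ((((m + 1 : ℕ)) : ℝ) / N) - g ((m : ℝ) / N)) / 2)|
        ≤ (n : ℝ) * (ε / (4 * N)) := by
      calc |∑ m ∈ Finset.range n, ((N : ℝ) * (∫ z in ((m : ℝ) / N)..((((m + 1 : ℕ)) : ℝ) / N), g z)
            - g ((m : ℝ) / N) - (g ((((m + 1 : ℕ)) : ℝ) / N) - g ((m : ℝ) / N)) / 2)|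
          ≤ ∑ m ∈ Finset.range n, |((N : ℝ) * (∫ z in ((m : ℝ) / N)..((((m + 1 : ℕ)) : ℝ) / N), g z)
            - g ((m : ℝ) / N) - (g ((((m + 1 : ℕ)) : ℝ) / N) - g ((m : ℝ) / N)) / 2)| :=
            Finset.abs_sum_le_sum_abs _ _
        _ ≤ (Finset.range n).card • (ε / (4 * N)) := Finset.sum_le_card_nsmul _ _ _ hterm
        _ = (n : ℝ) * (ε / (4 * N)) := by
            simp [nsmul_eq_mul]
    have hfin : (n : ℝ) * (ε / (4 * N)) ≤ ε / 4 := by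
      have hnn : (n : ℝ) ≤ N := by exact_mod_cast hnN
      have h1 : (n : ℝ) * (ε / (4 * N)) ≤ (N : ℝ) * (ε / (4 * N)) :=
        mul_le_mul_of_nonneg_right hnn (by positivity)
      have h2 : (N : ℝ) * (ε / (4 * N)) = ε / 4 := by field_simp
      linarith
    linarith
  have hc : Tendsto (fun N : ℕ => (g 0 - g ((k N : ℝ) / N)) / 2) atTop
      (𝓝 ((g 0 - g y) / 2)) := by
    have hgy : ContinuousAt g y := ContinuousOn.continuousAt hg (Icc_mem_nhds hy.1 hy.2)
    exact (tendsto_const_nhds.sub (hgy.tendsto.comp hklim)).div_const 2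
  have hfinal := hE.neg.add hc
  simp only [neg_zero, zero_add] at hfinal
  refine hfinal.congr (fun N => ?_)
  ring

/-- Asymptotics of the stationary weight: if `k_N/N → y ∈ (0,1)`,
then `(∏_{m<k_N} f_N(m/N)) · exp(−N ∫₀^{k_N/N} ln f) → √(Λ(0)M(0)/(Λ(y)M(y)))`,
where `f = Λ/M` and `f_N(y) = Λ(y)/M(y + 1/N)`. -/
theorem stmt_15 (Λ M : ℝ → ℝ)
    (hΛpos : ∀ y ∈ Set.Icc (0:ℝ) 1, 0 < Λ y)
    (hMpos : ∀ y ∈ Set.Icc (0:ℝ) 1, 0 < M y)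
    (hΛC1 : ContDiffOn ℝ 1 Λ (Set.Icc 0 1))
    (hMC1 : ContDiffOn ℝ 1 M (Set.Icc 0 1))
    (y : ℝ) (hy : y ∈ Set.Ioo (0:ℝ) 1)
    (k : ℕ → ℕ) (hk : ∀ N, k N ≤ N)
    (hklim : Tendsto (fun N : ℕ => (k N : ℝ) / N) atTop (𝓝 y)) :
    Tendsto
      (fun N : ℕ =>
        (∏ m ∈ Finset.range (k N), Λ (m / N) / M (m / N + 1 / N)) *
          Real.exp (-(N : ℝ) * ∫ z in (0:ℝ)..((k N : ℝ) / N), Real.log (Λ z / M z)))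
      atTop
      (𝓝 (Real.sqrt (Λ 0 * M 0 / (Λ y * M y)))) := by
  have h01 : (0:ℝ) ∈ Icc (0:ℝ) 1 := by norm_num
  have hys : y ∈ Icc (0:ℝ) 1 := ⟨hy.1.le, hy.2.le⟩
  have hΛne : ∀ t ∈ Icc (0:ℝ) 1, Λ t ≠ 0 := fun t ht => (hΛpos t ht).ne'
  have hMne : ∀ t ∈ Icc (0:ℝ) 1, M t ≠ 0 := fun t ht => (hMpos t ht).ne'
  set g : ℝ → ℝ := fun t => Real.log (Λ t) - Real.log (M t) with hgdef
  have hgC1 : ContDiffOn ℝ 1 g (Icc 0 1) := (hΛC1.log hΛne).sub (hMC1.log hMne)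
  set φ : ℝ → ℝ := derivWithin g (Icc 0 1) with hφdef
  have hφcont : ContinuousOn φ (Icc 0 1) :=
    hgC1.continuousOn_derivWithin (uniqueDiffOn_Icc one_pos) le_rfl
  have hd : ∀ x ∈ Ioo (0:ℝ) 1, HasDerivAt g (φ x) x := fun x hx =>
    (((hgC1.differentiableOn one_ne_zero) x (Ioo_subset_Icc_self hx)).hasDerivWithinAt).hasDerivAt
      (Icc_mem_nhds hx.1 hx.2)
  have hmain := my_key g φ hgC1.continuousOn hφcont hd y hy k hk hklim
  have hMlog : ContinuousOn (fun t => Real.log (M t)) (Icc 0 1) := hMC1.continuousOn.log hMne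
  have hMy : ContinuousAt (fun t => Real.log (M t)) y :=
    ContinuousOn.continuousAt hMlog (Icc_mem_nhds hy.1 hy.2)
  have hS : Tendsto (fun N : ℕ =>
      ((∑ m ∈ Finset.range (k N), g ((m : ℝ) / (N : ℝ)))
        - N * ∫ z in (0:ℝ)..((k N : ℝ) / N), g z)
      + (Real.log (M 0) - Real.log (M ((k N : ℝ) / N)))) atTop
      (𝓝 (((g 0 - g y) / 2) + (Real.log (M 0) - Real.log (M y)))) :=
    hmain.add (tendsto_const_nhds.sub (hMy.tendsto.comp hklim))
  have hexp := (Real.continuous_exp.tendsto _).comp hS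
  have hA : (0:ℝ) < Λ 0 * M 0 / (Λ y * M y) := by
    have h1 := hΛpos 0 h01
    have h2 := hMpos 0 h01
    have h3 := hΛpos y hys
    have h4 := hMpos y hys
    positivity
  have hLA : Real.exp (((g 0 - g y) / 2) + (Real.log (M 0) - Real.log (M y)))
      = Real.sqrt (Λ 0 * M 0 / (Λ y * M y)) := by
    have h1 := hΛpos 0 h01
    have h2 := hMpos 0 h01
    have h3 := hΛpos y hys
    have h4 := hMpos y hys
    rw [Real.sqrt_eq_rpow, Real.rpow_def_of_pos hA]
    congr 1
    rw [Real.log_div (by positivity) (by positivity), Real.log_mul h1.ne' h2.ne',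
      Real.log_mul h3.ne' h4.ne']
    simp only [hgdef]
    ring
  rw [← hLA]
  refine Tendsto.congr' ?_ hexp
  filter_upwards [eventually_ge_atTop 1] with N hN
  have hNpos : (0:ℝ) < N := by exact_mod_cast hN
  set n := k N with hn
  have hnN : n ≤ N := hk N
  have hc0 : (0:ℝ) ≤ (n : ℝ) / N := by positivity
  have hc1 : (n : ℝ) / N ≤ 1 := (div_le_one hNpos).mpr (by exact_mod_cast hnN)
  have hmem : ∀ m : ℕ, m ≤ N → ((m : ℝ) / N) ∈ Icc (0:ℝ) 1 := fun m hm =>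
    ⟨div_nonneg (Nat.cast_nonneg m) hNpos.le,
      (div_le_one hNpos).mpr (by exact_mod_cast hm)⟩
  have hIcong : (∫ z in (0:ℝ)..((n : ℝ) / N), Real.log (Λ z / M z))
      = ∫ z in (0:ℝ)..((n : ℝ) / N), g z := by
    apply intervalIntegral.integral_congr
    intro z hz
    rw [uIcc_of_le hc0] at hz
    have hzs : z ∈ Icc (0:ℝ) 1 := ⟨hz.1, le_trans hz.2 hc1⟩
    simp only [hgdef]
    exact Real.log_div (hΛne z hzs) (hMne z hzs)
  have hprod : (∏ m ∈ Finset.range n, Λ ((m : ℝ) / N) / M ((m : ℝ) / N + 1 / N))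
      = Real.exp (∑ m ∈ Finset.range n,
          (Real.log (Λ ((m : ℝ) / N)) - Real.log (M ((m : ℝ) / N + 1 / N)))) := by
    rw [Real.exp_sum]
    apply Finset.prod_congr rfl
    intro m hm
    have hm' : m < n := Finset.mem_range.mp hm
    have hmN : m ≤ N := le_trans hm'.le hnN
    have hm1N : m + 1 ≤ N := Nat.succ_le_of_lt (lt_of_lt_of_le hm' hnN)
    have h1 : ((m : ℝ) / N) ∈ Icc (0:ℝ) 1 := hmem m hmN
    have h2 : ((m : ℝ) / N + 1 / N) ∈ Icc (0:ℝ) 1 := by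
      have := hmem (m + 1) hm1N
      have heq : ((m : ℝ) / N + 1 / N) = (((m + 1 : ℕ)) : ℝ) / N := by push_cast; ring
      rwa [heq]
    rw [Real.exp_sub, Real.exp_log (hΛpos _ h1), Real.exp_log (hMpos _ h2)]
  have htel2 : (∑ m ∈ Finset.range n,
        (Real.log (M ((m : ℝ) / N + 1 / N)) - Real.log (M ((m : ℝ) / N))))
      = Real.log (M ((n : ℝ) / N)) - Real.log (M 0) := by
    have h := Finset.sum_range_sub (f := fun m : ℕ => Real.log (M ((m : ℝ) / N))) n
    simp only [Nat.cast_zero, zero_div] at h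
    rw [← h]
    apply Finset.sum_congr rfl
    intro m _
    have heq : ((m : ℝ) / N + 1 / N) = (((m + 1 : ℕ)) : ℝ) / N := by push_cast; ring
    rw [heq]
  have hsum : (∑ m ∈ Finset.range n,
        (Real.log (Λ ((m : ℝ) / N)) - Real.log (M ((m : ℝ) / N + 1 / N))))
      = (∑ m ∈ Finset.range n, g ((m : ℝ) / N))
        - (Real.log (M ((n : ℝ) / N)) - Real.log (M 0)) := by
    rw [← htel2, ← Finset.sum_sub_distrib]
    apply Finset.sum_congr rfl
    intro m _
    simp only [hgdef]
    ring
  show Real.exp _ = _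
  rw [hprod, hsum, hIcong, ← Real.exp_add]
  congr 1
  ring
end
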